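/- If μ is a locally subexponential probability distribution on [0,∞) and ρ(dx) = c⁻¹ 1_{[0,c)}(x)dx is the uniform distribution on [0,c), then ρ * μ has a subexponential density (ρ * μ ∈ S_ac). -/

import Mathlib

open MeasureTheory Filter Set

noncomputable def conv (f g : ℝ → ℝ) (x : ℝ) : ℝ := ∫ u, f (x - u) * g u

def IsDensity (f : ℝ → ℝ) : Prop := (∀ x, 0 ≤ f x) ∧ (∫ x, f x) = 1

def LongTailedFun (f : ℝ → ℝ) : Prop :=
  (∀ᶠ x in atTop, 0 < f x) ∧
  ∀ a : ℝ, Tendsto (fun x => f (x + a) / f x) atTop (nhds 1)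

def LongDensity (f : ℝ → ℝ) : Prop := IsDensity f ∧ LongTailedFun f

def SubexpDensity (f : ℝ → ℝ) : Prop :=
  LongDensity f ∧ Tendsto (fun x => conv f f x / f x) atTop (nhds 2)

noncomputable def mconv (μ ν : Measure ℝ) : Measure ℝ :=
  (μ.prod ν).map (fun p : ℝ × ℝ => p.1 + p.2)

noncomputable def locMass (μ : Measure ℝ) (c x : ℝ) : ℝ := (μ (Ioc x (x + c))).toReal

def MemLDelta (μ : Measure ℝ) (c : ℝ) : Prop :=
  (∀ᶠ x in atTop, 0 < locMass μ c x) ∧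
  ∀ a : ℝ, Tendsto (fun x => locMass μ c (x + a) / locMass μ c x) atTop (nhds 1)

def MemSDelta (μ : Measure ℝ) (c : ℝ) : Prop :=
  MemLDelta μ c ∧
  Tendsto (fun x => locMass (mconv μ μ) c x / locMass μ c x) atTop (nhds 2)

def LLoc (μ : Measure ℝ) : Prop := ∀ c > 0, MemLDelta μ c
def SLoc (μ : Measure ℝ) : Prop := ∀ c > 0, MemSDelta μ c

def LAc (μ : Measure ℝ) : Prop :=
  ∃ g : ℝ → ℝ, LongDensity g ∧ μ = volume.withDensity (fun x => ENNReal.ofReal (g x))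
def SAc (μ : Measure ℝ) : Prop :=
  ∃ g : ℝ → ℝ, SubexpDensity g ∧ μ = volume.withDensity (fun x => ENNReal.ofReal (g x))

open scoped ENNReal

/-! ### Auxiliary lemmas -/

section Aux

lemma measurable_cdf' (μ : Measure ℝ) [IsFiniteMeasure μ] :
    Measurable (fun x => (μ (Iic x)).toReal) :=
  Monotone.measurable (fun _ _ hab =>
    ENNReal.toReal_mono (measure_ne_top μ _) (measure_mono (Iic_subset_Iic.2 hab)))

lemma locMass_eq' (μ : Measure ℝ) [IsFiniteMeasure μ] {d : ℝ} (hd : 0 ≤ d) (x : ℝ) :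
    locMass μ d x = (μ (Iic (x + d))).toReal - (μ (Iic x)).toReal := by
  have hu : Iic x ∪ Ioc x (x + d) = Iic (x + d) :=
    Iic_union_Ioc_eq_Iic (le_add_of_nonneg_right hd)
  have h2 : μ (Iic (x + d)) = μ (Iic x) + μ (Ioc x (x + d)) := by
    rw [← hu, measure_union (Iic_disjoint_Ioc le_rfl) measurableSet_Ioc]
  have h3 := congrArg ENNReal.toReal h2
  rw [ENNReal.toReal_add (measure_ne_top μ _) (measure_ne_top μ _)] at h3
  simp only [locMass]; linarith

lemma measurable_locMass' (μ : Measure ℝ) [IsFiniteMeasure μ] {d : ℝ} (hd : 0 ≤ d) :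
    Measurable (locMass μ d) := by
  have : locMass μ d = fun x => (μ (Iic (x + d))).toReal - (μ (Iic x)).toReal :=
    funext (locMass_eq' μ hd)
  rw [this]
  exact ((measurable_cdf' μ).comp (measurable_id.add_const d)).sub (measurable_cdf' μ)

lemma locMass_add' (μ : Measure ℝ) [IsFiniteMeasure μ] {d e : ℝ} (hd : 0 ≤ d) (he : 0 ≤ e)
    (x : ℝ) : locMass μ (d + e) x = locMass μ d x + locMass μ e (x + d) := by
  have hu : Ioc x (x + d) ∪ Ioc (x + d) (x + d + e) = Ioc x (x + d + e) :=
    Ioc_union_Ioc_eq_Ioc (le_add_of_nonneg_right hd) (le_add_of_nonneg_right he)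
  have h2 : μ (Ioc x (x + (d + e))) = μ (Ioc x (x + d)) + μ (Ioc (x + d) (x + d + e)) := by
    rw [← add_assoc, ← hu, measure_union (Ioc_disjoint_Ioc_of_le le_rfl) measurableSet_Ioc]
  simp only [locMass]
  rw [h2, ENNReal.toReal_add (measure_ne_top μ _) (measure_ne_top μ _)]

lemma mconv_apply' (μ₁ μ₂ : Measure ℝ) [SFinite μ₂] {S : Set ℝ} (hS : MeasurableSet S) :
    mconv μ₁ μ₂ S = ∫⁻ w, μ₂ {v | w + v ∈ S} ∂μ₁ := by
  rw [mconv, Measure.map_apply measurable_add hS,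
    Measure.prod_apply (measurable_add hS)]
  rfl

lemma mconv_comm' (μ₁ μ₂ : Measure ℝ) [SFinite μ₁] [SFinite μ₂] :
    mconv μ₁ μ₂ = mconv μ₂ μ₁ := by
  rw [mconv, mconv, ← Measure.prod_swap, Measure.map_map measurable_add measurable_swap]
  congr 1
  funext p
  simp [Function.comp, add_comm]

end Aux

section Limits
variable {μ : Measure ℝ} [IsProbabilityMeasure μ]

lemma tendsto_locMass_nat (hL : LLoc μ) (k : ℕ) {b : ℝ} (hb : 0 < b) :
    Tendsto (fun x => locMass μ (k * b) x / locMass μ b x) atTop (nhds k) := by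
  induction k with
  | zero =>
      simp only [Nat.cast_zero, zero_mul]
      have : (fun x => locMass μ 0 x / locMass μ b x) = fun _ => (0:ℝ) := by
        funext x; simp [locMass]
      rw [this]; exact tendsto_const_nhds
  | succ k ih =>
      have heq : ∀ x, locMass μ ((k + 1 : ℕ) * b) x
          = locMass μ ((k : ℝ) * b) x + locMass μ b (x + (k : ℝ) * b) := by
        intro x
        have : ((k + 1 : ℕ) : ℝ) * b = (k : ℝ) * b + b := by push_cast; ring
        rw [this, locMass_add' μ (by positivity) hb.le]
      have : Tendsto (fun x => locMass μ ((k:ℝ) * b) x / locMass μ b x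
          + locMass μ b (x + (k:ℝ) * b) / locMass μ b x) atTop (nhds ((k : ℝ) + 1)) :=
        ih.add ((hL b hb).2 ((k : ℝ) * b))
      refine Tendsto.congr (fun x => ?_) (by push_cast; exact this)
      rw [heq x, add_div]

lemma tendsto_locMass_ratio (hL : LLoc μ) {p q : ℕ} (hq : 0 < q) {b : ℝ} (hb : 0 < b) :
    Tendsto (fun x => locMass μ (p * b) x / locMass μ (q * b) x) atTop
      (nhds ((p : ℝ) / q)) := by
  have h1 := tendsto_locMass_nat hL p hb
  have h2 := tendsto_locMass_nat hL q hb
  have hq' : ((q : ℝ)) ≠ 0 := Nat.cast_ne_zero.2 hq.ne'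
  have := h1.div h2 hq'
  apply this.congr'
  filter_upwards [(hL b hb).1] with x hx
  rcases eq_or_ne (locMass μ ((q:ℝ) * b) x) 0 with h | h
  · simp [h]
  · field_simp
    simp only [Pi.div_apply]
    rw [mul_comm b (q:ℝ), div_div_div_cancel_right₀ hx.ne']

lemma tendsto_key (hμ : SLoc μ) {p q : ℕ} (hp : 0 < p) (hq : 0 < q) {b : ℝ} (hb : 0 < b)
    (a : ℝ) :
    Tendsto (fun x => locMass (mconv μ μ) (p * b) (x + a) / locMass μ (q * b) x) atTop
      (nhds (2 * ((p : ℝ) / q))) := by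
  have hL : LLoc μ := fun d hd => (hμ d hd).1
  have hpb : (0:ℝ) < p * b := by positivity
  have hqb : (0:ℝ) < q * b := by positivity
  have hshift : Tendsto (fun x : ℝ => x + a) atTop atTop :=
    tendsto_atTop_add_const_right atTop a tendsto_id
  have f1 : Tendsto (fun x => locMass (mconv μ μ) (p * b) (x + a)
      / locMass μ (p * b) (x + a)) atTop (nhds 2) := (hμ _ hpb).2.comp hshift
  have f2 : Tendsto (fun x => locMass μ (p * b) (x + a)
      / locMass μ (q * b) (x + a)) atTop (nhds ((p:ℝ)/q)) :=
    (tendsto_locMass_ratio hL hq hb).comp hshift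
  have f3 : Tendsto (fun x => locMass μ (q * b) (x + a)
      / locMass μ (q * b) x) atTop (nhds 1) := (hL _ hqb).2 a
  have := (f1.mul f2).mul f3
  rw [mul_one] at this
  apply this.congr'
  filter_upwards [hshift.eventually (hL _ hpb).1, hshift.eventually (hL _ hqb).1]
    with x h1 h2
  rcases eq_or_ne (locMass μ ((q:ℝ) * b) x) 0 with h | h
  · simp [h]
  · field_simp
    rw [mul_comm b (q:ℝ), mul_comm (locMass μ _ (x + a)), mul_div_mul_right _ _ h2.ne']

end Limits

section Density
variable {μ : Measure ℝ} [IsProbabilityMeasure μ] {c : ℝ}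

lemma rho_density_eq (hc : 0 < c) :
    (fun x => ENNReal.ofReal (indicator (Ico (0:ℝ) c) (fun _ => c⁻¹) x))
      = (Ico (0:ℝ) c).indicator (fun _ => ENNReal.ofReal c⁻¹) := by
  funext x
  by_cases hx : x ∈ Ico (0:ℝ) c <;> simp [indicator, hx]

lemma rho_prob (hc : 0 < c) :
    IsProbabilityMeasure (volume.withDensity
      (fun x => ENNReal.ofReal (indicator (Ico (0:ℝ) c) (fun _ => c⁻¹) x))) := by
  constructor
  rw [withDensity_apply _ MeasurableSet.univ, Measure.restrict_univ, rho_density_eq hc,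
    lintegral_indicator measurableSet_Ico, setLIntegral_const, Real.volume_Ico]
  rw [← ENNReal.ofReal_mul (by positivity)]
  simp [inv_mul_cancel₀ hc.ne']

lemma stepA (μ : Measure ℝ) [IsProbabilityMeasure μ] (hc : 0 < c) :
    mconv (volume.withDensity
      (fun x => ENNReal.ofReal (indicator (Ico (0:ℝ) c) (fun _ => c⁻¹) x))) μ
    = volume.withDensity (fun x => ENNReal.ofReal (c⁻¹ * locMass μ c (x - c))) := by
  set f : ℝ → ℝ≥0∞ := (Ico (0:ℝ) c).indicator (fun _ => ENNReal.ofReal c⁻¹) with hf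
  have hfm : Measurable f := measurable_const.indicator measurableSet_Ico
  set ρ := volume.withDensity
      (fun x => ENNReal.ofReal (indicator (Ico (0:ℝ) c) (fun _ => c⁻¹) x)) with hρ
  have hρ' : ρ = volume.withDensity f := by rw [hρ, rho_density_eq hc]
  haveI : IsProbabilityMeasure ρ := rho_prob hc
  ext s hs
  rw [mconv_comm', mconv_apply' _ _ hs, withDensity_apply _ hs]
  have key : ∀ w : ℝ, ρ {v | w + v ∈ s}
      = ∫⁻ y, s.indicator (fun _ => (1:ℝ≥0∞)) y * f (y - w) := by
    intro w
    have hB : MeasurableSet {v : ℝ | w + v ∈ s} := (measurable_const_add w) hs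
    rw [hρ', withDensity_apply _ hB, ← lintegral_indicator hB]
    rw [← lintegral_add_right_eq_self (fun y => s.indicator (fun _ => (1:ℝ≥0∞)) y * f (y - w)) w]
    congr 1
    funext v
    by_cases hv : w + v ∈ s
    · simp [indicator, hv, add_comm v w, show v + w - w = v by ring]
    · simp [indicator, hv, add_comm v w, show v + w - w = v by ring]
  simp only [key]
  rw [lintegral_lintegral_swap]
  · have inner : ∀ y : ℝ, ∫⁻ w, s.indicator (fun _ => (1:ℝ≥0∞)) y * f (y - w) ∂μ
        = s.indicator (fun _ => (1:ℝ≥0∞)) y * ENNReal.ofReal (c⁻¹ * locMass μ c (y - c)) := by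
      intro y
      rw [lintegral_const_mul' _ _ (by by_cases hy : y ∈ s <;> simp [indicator, hy])]
      congr 1
      have : (fun w => f (y - w)) = (Ioc (y - c) y).indicator (fun _ => ENNReal.ofReal c⁻¹) := by
        funext w
        have hiff : (y - w ∈ Ico (0:ℝ) c) ↔ w ∈ Ioc (y - c) y := by
          simp only [mem_Ico, mem_Ioc]
          constructor <;> intro h <;> constructor <;> linarith [h.1, h.2]
        by_cases hw : w ∈ Ioc (y - c) y
        · simp [hf, indicator, hiff.2 hw, hw]
        · have hnot : y - w ∉ Ico (0:ℝ) c := fun h => hw (hiff.1 h)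
          rw [hf, Set.indicator_of_notMem hnot, Set.indicator_of_notMem hw]
      rw [this, lintegral_indicator measurableSet_Ioc, setLIntegral_const]
      rw [ENNReal.ofReal_mul (by positivity), locMass]
      rw [ENNReal.ofReal_toReal (measure_ne_top μ _), show y - c + c = y by ring, mul_comm]
    simp only [inner]
    rw [← lintegral_indicator hs]
    congr 1
    funext y
    by_cases hy : y ∈ s <;> simp [indicator, hy]
  · apply Measurable.aemeasurable
    apply Measurable.mul
    · exact (measurable_const.indicator hs).comp measurable_snd
    · exact hfm.comp (measurable_snd.sub measurable_fst)

lemma measurable_M (μ : Measure ℝ) [IsFiniteMeasure μ] (hc : 0 < c) :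
    Measurable (fun y => μ (Ioc (y - c) y)) := by
  have : (fun y => μ (Ioc (y - c) y))
      = fun y => ENNReal.ofReal (locMass μ c (y - c)) := by
    funext y
    rw [locMass, show y - c + c = y by ring, ENNReal.ofReal_toReal (measure_ne_top μ _)]
  rw [this]
  exact ((measurable_locMass' μ hc.le).comp (measurable_id.sub_const c)).ennreal_ofReal

lemma inner_eq (μ : Measure ℝ) [SFinite μ] (c t : ℝ) :
    ∫⁻ v, μ (Ioc (t - v - c) (t - v)) ∂μ = mconv μ μ (Ioc (t - c) t) := by
  rw [mconv_apply' μ μ measurableSet_Ioc]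
  congr 1
  funext w
  have : {v | w + v ∈ Ioc (t - c) t} = Ioc (t - c - w) (t - w) := by
    ext v
    simp only [mem_setOf_eq, mem_Ioc]
    constructor <;> intro h <;> exact ⟨by linarith [h.1], by linarith [h.2]⟩
  rw [this]
  congr 1
  rw [sub_right_comm]

lemma A_eq (μ : Measure ℝ) [IsProbabilityMeasure μ] (hc : 0 < c) (x : ℝ) :
    ∫⁻ u, μ (Ioc (x - u - c) (x - u)) * μ (Ioc (u - c) u)
      = ∫⁻ s in Ico 0 c, mconv μ μ (Ioc (x - s - c) (x - s)) := by
  set M : ℝ → ℝ≥0∞ := fun y => μ (Ioc (y - c) y) with hM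
  have hMm : Measurable M := measurable_M μ hc
  have mem_iff : ∀ u v : ℝ, v ∈ Ioc (u - c) u ↔ u ∈ Ico v (v + c) := by
    intro u v
    simp only [mem_Ioc, mem_Ico]
    constructor <;> intro h <;> exact ⟨by linarith [h.1], by linarith [h.2]⟩
  have h4a : ∀ u : ℝ, M u = ∫⁻ v, (Ico v (v + c)).indicator 1 u ∂μ := by
    intro u
    rw [hM]
    simp only
    rw [← lintegral_indicator_one (measurableSet_Ioc : MeasurableSet (Ioc (u - c) u))]
    congr 1
    funext v
    by_cases hv : v ∈ Ioc (u - c) u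
    · rw [Set.indicator_of_mem hv, Set.indicator_of_mem ((mem_iff u v).1 hv)]; rfl
    · rw [Set.indicator_of_notMem hv,
        Set.indicator_of_notMem (fun h => hv ((mem_iff u v).2 h))]
  calc ∫⁻ u, M (x - u) * M u
      = ∫⁻ u, ∫⁻ v, M (x - u) * (Ico v (v + c)).indicator 1 u ∂μ := by
        congr 1; funext u
        rw [lintegral_const_mul' _ _ (measure_ne_top μ _), ← h4a u]
    _ = ∫⁻ v, ∫⁻ u, M (x - u) * (Ico v (v + c)).indicator 1 u ∂volume ∂μ := by
        apply lintegral_lintegral_swap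
        apply Measurable.aemeasurable
        apply Measurable.mul
        · exact hMm.comp (measurable_const.sub measurable_fst)
        · have heq : (fun p : ℝ × ℝ => (Ico p.2 (p.2 + c)).indicator (1 : ℝ → ℝ≥0∞) p.1)
              = {p : ℝ × ℝ | p.2 ≤ p.1 ∧ p.1 < p.2 + c}.indicator (fun _ => (1:ℝ≥0∞)) := by
            funext p
            by_cases hp : p.2 ≤ p.1 ∧ p.1 < p.2 + c
            · have hp' : p ∈ {q : ℝ × ℝ | q.2 ≤ q.1 ∧ q.1 < q.2 + c} := hp
              rw [Set.indicator_of_mem (mem_Ico.2 hp), Set.indicator_of_mem hp']; rfl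
            · have hp' : p ∉ {q : ℝ × ℝ | q.2 ≤ q.1 ∧ q.1 < q.2 + c} := hp
              rw [Set.indicator_of_notMem (fun h => hp (mem_Ico.1 h)),
                Set.indicator_of_notMem hp']
          have : Measurable (fun p : ℝ × ℝ =>
              (Ico p.2 (p.2 + c)).indicator (1 : ℝ → ℝ≥0∞) p.1) := by
            rw [heq]
            exact measurable_const.indicator
              ((measurableSet_le measurable_snd measurable_fst).inter
                (measurableSet_lt measurable_fst (measurable_snd.add_const c)))
          exact this
    _ = ∫⁻ v, ∫⁻ s in Ico 0 c, M (x - v - s) ∂volume ∂μ := by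
        congr 1; funext v
        have e1 : (fun u => M (x - u) * (Ico v (v + c)).indicator 1 u)
            = (Ico v (v + c)).indicator (fun u => M (x - u)) := by
          funext u
          by_cases hu : u ∈ Ico v (v + c)
          · rw [Set.indicator_of_mem hu, Set.indicator_of_mem hu]
            simp
          · rw [Set.indicator_of_notMem hu, Set.indicator_of_notMem hu, mul_zero]
        rw [e1, ← lintegral_indicator measurableSet_Ico,
          ← lintegral_add_right_eq_self
            ((Ico v (v + c)).indicator (fun u => M (x - u))) v]
        congr 1
        funext s
        by_cases hs : s ∈ Ico (0:ℝ) c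
        · have hsv : s + v ∈ Ico v (v + c) := by
            rcases mem_Ico.1 hs with ⟨h1, h2⟩
            exact mem_Ico.2 ⟨by linarith, by linarith⟩
          rw [Set.indicator_of_mem hsv, Set.indicator_of_mem hs,
            show x - (s + v) = x - v - s by ring]
        · have hsv : s + v ∉ Ico v (v + c) := by
            intro h
            rcases mem_Ico.1 h with ⟨h1, h2⟩
            exact hs (mem_Ico.2 ⟨by linarith, by linarith⟩)
          rw [Set.indicator_of_notMem hsv, Set.indicator_of_notMem hs]
    _ = ∫⁻ s in Ico 0 c, ∫⁻ v, M (x - v - s) ∂μ ∂volume := by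
        apply lintegral_lintegral_swap
        exact (hMm.comp
          ((measurable_const.sub measurable_fst).sub measurable_snd)).aemeasurable
    _ = ∫⁻ s in Ico 0 c, mconv μ μ (Ioc (x - s - c) (x - s)) := by
        apply setLIntegral_congr_fun measurableSet_Ico
        intro s _
        have : ∀ v, M (x - v - s) = μ (Ioc ((x - s) - v - c) ((x - s) - v)) := by
          intro v
          rw [hM]
          simp only
          congr 2 <;> ring
        simp only [this]
        exact inner_eq μ c (x - s)

lemma conv_eq (μ : Measure ℝ) [IsProbabilityMeasure μ] (hc : 0 < c) (x : ℝ) :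
    conv (fun y => c⁻¹ * locMass μ c (y - c)) (fun y => c⁻¹ * locMass μ c (y - c)) x
      = c⁻¹ * c⁻¹ * (∫⁻ s in Ico 0 c, mconv μ μ (Ioc (x - s - c) (x - s))).toReal := by
  set g : ℝ → ℝ := fun y => c⁻¹ * locMass μ c (y - c) with hg
  have hgm : Measurable g := ((measurable_locMass' μ hc.le).comp
    (measurable_id.sub_const c)).const_mul c⁻¹
  have hgnn : ∀ y, 0 ≤ g y := fun y => mul_nonneg (by positivity) ENNReal.toReal_nonneg
  have gM : ∀ y, g y = c⁻¹ * (μ (Ioc (y - c) y)).toReal := by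
    intro y
    rw [hg]
    simp only [locMass, show y - c + c = y by ring]
  have hmeas : AEStronglyMeasurable (fun u => g (x - u) * g u) volume :=
    ((hgm.comp (measurable_id.const_sub x)).mul hgm).aestronglyMeasurable
  unfold conv
  rw [integral_eq_lintegral_of_nonneg_ae
    (Filter.Eventually.of_forall (fun u => mul_nonneg (hgnn _) (hgnn _))) hmeas]
  have h2 : ∀ u : ℝ, ENNReal.ofReal (g (x - u) * g u)
      = (ENNReal.ofReal c⁻¹ * ENNReal.ofReal c⁻¹)
        * (μ (Ioc (x - u - c) (x - u)) * μ (Ioc (u - c) u)) := by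
    intro u
    rw [gM, gM,
      ENNReal.ofReal_mul (mul_nonneg (by positivity) ENNReal.toReal_nonneg),
      ENNReal.ofReal_mul (by positivity : (0:ℝ) ≤ c⁻¹),
      ENNReal.ofReal_mul (by positivity : (0:ℝ) ≤ c⁻¹),
      ENNReal.ofReal_toReal (measure_ne_top μ _), ENNReal.ofReal_toReal (measure_ne_top μ _)]
    ring
  simp only [h2]
  rw [lintegral_const_mul' _ _ (ENNReal.mul_ne_top ENNReal.ofReal_ne_top ENNReal.ofReal_ne_top)]
  rw [A_eq μ hc x, ENNReal.toReal_mul, ENNReal.toReal_mul,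
    ENNReal.toReal_ofReal (by positivity : (0:ℝ) ≤ c⁻¹)]

end Density

section Riemann

lemma split_lintegral (f : ℝ → ℝ≥0∞) {b : ℝ} (hb : 0 ≤ b) (m : ℕ) :
    ∫⁻ s in Ico (0:ℝ) ((m:ℝ) * b), f s
      = ∑ k ∈ Finset.range m, ∫⁻ s in Ico ((k:ℝ) * b) (((k:ℝ) + 1) * b), f s := by
  induction m with
  | zero => simp
  | succ m ih =>
      have h1 : (0:ℝ) ≤ (m:ℝ) * b := by positivity
      have h2 : (m:ℝ) * b ≤ ((m:ℝ) + 1) * b := by nlinarith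
      have hcast : ((m + 1 : ℕ) : ℝ) * b = ((m:ℝ) + 1) * b := by push_cast; ring
      rw [hcast, ← Ico_union_Ico_eq_Ico h1 h2,
        lintegral_union measurableSet_Ico Ico_disjoint_Ico_same, ih,
        Finset.sum_range_succ]

lemma Tr_upper (ν : Measure ℝ) [IsFiniteMeasure ν] {b : ℝ} (hb : 0 < b) (n : ℕ) (x : ℝ) :
    (∫⁻ s in Ico (0:ℝ) ((n:ℝ) * b), ν (Ioc (x - s - (n:ℝ) * b) (x - s))).toReal
      ≤ ∑ k ∈ Finset.range n,
          b * locMass ν ((n:ℝ) * b + b) (x - (n:ℝ) * b - ((k:ℝ) + 1) * b) := by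
  have hEN : ∫⁻ s in Ico (0:ℝ) ((n:ℝ)*b), ν (Ioc (x - s - (n:ℝ)*b) (x - s))
      ≤ ∑ k ∈ Finset.range n,
          ENNReal.ofReal b * ν (Ioc (x - (n:ℝ)*b - ((k:ℝ)+1)*b) (x - (k:ℝ)*b)) := by
    rw [split_lintegral _ hb.le n]
    apply Finset.sum_le_sum
    intro k _
    have hbd : ∀ s ∈ Ico ((k:ℝ)*b) (((k:ℝ)+1)*b),
        ν (Ioc (x - s - (n:ℝ)*b) (x - s))
          ≤ ν (Ioc (x - (n:ℝ)*b - ((k:ℝ)+1)*b) (x - (k:ℝ)*b)) := by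
      intro s hs
      rcases mem_Ico.1 hs with ⟨h1, h2⟩
      exact measure_mono (Ioc_subset_Ioc (by linarith) (by linarith))
    calc ∫⁻ s in Ico ((k:ℝ)*b) (((k:ℝ)+1)*b), ν (Ioc (x - s - (n:ℝ)*b) (x - s))
        ≤ ∫⁻ _ in Ico ((k:ℝ)*b) (((k:ℝ)+1)*b),
            ν (Ioc (x - (n:ℝ)*b - ((k:ℝ)+1)*b) (x - (k:ℝ)*b)) :=
          setLIntegral_mono measurable_const hbd
      _ = ENNReal.ofReal b * ν (Ioc (x - (n:ℝ)*b - ((k:ℝ)+1)*b) (x - (k:ℝ)*b)) := by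
          rw [setLIntegral_const, Real.volume_Ico,
            show ((k:ℝ)+1)*b - (k:ℝ)*b = b by ring, mul_comm]
  have hterm : ∀ k ∈ Finset.range n,
      ENNReal.ofReal b * ν (Ioc (x - (n:ℝ)*b - ((k:ℝ)+1)*b) (x - (k:ℝ)*b)) ≠ ⊤ :=
    fun k _ => ENNReal.mul_ne_top ENNReal.ofReal_ne_top (measure_ne_top ν _)
  have hfin : (∑ k ∈ Finset.range n,
      ENNReal.ofReal b * ν (Ioc (x - (n:ℝ)*b - ((k:ℝ)+1)*b) (x - (k:ℝ)*b))) ≠ ⊤ :=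
    (ENNReal.sum_lt_top.2 (fun k hk => lt_top_iff_ne_top.2 (hterm k hk))).ne
  refine le_trans (ENNReal.toReal_mono hfin hEN) ?_
  rw [ENNReal.toReal_sum hterm]
  apply le_of_eq
  apply Finset.sum_congr rfl
  intro k _
  rw [ENNReal.toReal_mul, ENNReal.toReal_ofReal hb.le]
  unfold locMass
  rw [show x - (n:ℝ)*b - ((k:ℝ)+1)*b + ((n:ℝ)*b + b) = x - (k:ℝ)*b by ring]

lemma Tr_lower (ν : Measure ℝ) [IsFiniteMeasure ν] {b : ℝ} (hb : 0 < b) {n : ℕ}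
    (hn : 0 < n) (x : ℝ) :
    ∑ k ∈ Finset.range n, b * locMass ν ((n:ℝ) * b - b) (x - (n:ℝ) * b - (k:ℝ) * b)
      ≤ (∫⁻ s in Ico (0:ℝ) ((n:ℝ) * b), ν (Ioc (x - s - (n:ℝ) * b) (x - s))).toReal := by
  have hnb : (0:ℝ) < (n:ℝ) * b := by
    have : (0:ℝ) < (n:ℝ) := by exact_mod_cast hn
    positivity
  have hmf : Measurable (fun s => ν (Ioc (x - s - (n:ℝ)*b) (x - s))) :=
    (measurable_M ν hnb).comp (measurable_id.const_sub x)
  have hEN : ∑ k ∈ Finset.range n,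
        ENNReal.ofReal b * ν (Ioc (x - (n:ℝ)*b - (k:ℝ)*b) (x - ((k:ℝ)+1)*b))
      ≤ ∫⁻ s in Ico (0:ℝ) ((n:ℝ)*b), ν (Ioc (x - s - (n:ℝ)*b) (x - s)) := by
    rw [split_lintegral _ hb.le n]
    apply Finset.sum_le_sum
    intro k _
    have hbd : ∀ s ∈ Ico ((k:ℝ)*b) (((k:ℝ)+1)*b),
        ν (Ioc (x - (n:ℝ)*b - (k:ℝ)*b) (x - ((k:ℝ)+1)*b))
          ≤ ν (Ioc (x - s - (n:ℝ)*b) (x - s)) := by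
      intro s hs
      rcases mem_Ico.1 hs with ⟨h1, h2⟩
      exact measure_mono (Ioc_subset_Ioc (by linarith) (by linarith))
    calc ENNReal.ofReal b * ν (Ioc (x - (n:ℝ)*b - (k:ℝ)*b) (x - ((k:ℝ)+1)*b))
        = ∫⁻ _ in Ico ((k:ℝ)*b) (((k:ℝ)+1)*b),
            ν (Ioc (x - (n:ℝ)*b - (k:ℝ)*b) (x - ((k:ℝ)+1)*b)) := by
          rw [setLIntegral_const, Real.volume_Ico,
            show ((k:ℝ)+1)*b - (k:ℝ)*b = b by ring, mul_comm]
      _ ≤ ∫⁻ s in Ico ((k:ℝ)*b) (((k:ℝ)+1)*b), ν (Ioc (x - s - (n:ℝ)*b) (x - s)) :=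
          setLIntegral_mono hmf hbd
  have hT : (∫⁻ s in Ico (0:ℝ) ((n:ℝ)*b), ν (Ioc (x - s - (n:ℝ)*b) (x - s))) ≠ ⊤ := by
    refine ne_top_of_le_ne_top ?_ (setLIntegral_mono measurable_const
      (fun s _ => measure_mono (subset_univ _)))
    rw [setLIntegral_const]
    exact (ENNReal.mul_ne_top (measure_ne_top ν _)
      (by rw [Real.volume_Ico]; exact ENNReal.ofReal_ne_top))
  have := ENNReal.toReal_mono hT hEN
  refine le_trans (le_of_eq ?_) this
  rw [ENNReal.toReal_sum (fun k _ => ENNReal.mul_ne_top ENNReal.ofReal_ne_top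
    (measure_ne_top ν _))]
  apply Finset.sum_congr rfl
  intro k _
  rw [ENNReal.toReal_mul, ENNReal.toReal_ofReal hb.le]
  unfold locMass
  rw [show x - (n:ℝ)*b - (k:ℝ)*b + ((n:ℝ)*b - b) = x - ((k:ℝ)+1)*b by ring]

end Riemann

theorem stmt4 (μ : Measure ℝ) [IsProbabilityMeasure μ] (hsupp : μ (Iio 0) = 0) (hμ : SLoc μ)
    (c : ℝ) (hc : 0 < c) (ρ : Measure ℝ)
    (hρ : ρ = volume.withDensity
      (fun x => ENNReal.ofReal (indicator (Ico (0:ℝ) c) (fun _ => c⁻¹) x))) :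
    SAc (mconv ρ μ) := by
  have hL : LLoc μ := fun d hd => (hμ d hd).1
  haveI : IsProbabilityMeasure ρ := by rw [hρ]; exact rho_prob hc
  haveI hνP : IsProbabilityMeasure (mconv μ μ) :=
    Measure.isProbabilityMeasure_map (measurable_add.aemeasurable)
  haveI : IsProbabilityMeasure (mconv ρ μ) :=
    Measure.isProbabilityMeasure_map (measurable_add.aemeasurable)
  set g : ℝ → ℝ := fun y => c⁻¹ * locMass μ c (y - c) with hgdef
  have hgm : Measurable g := ((measurable_locMass' μ hc.le).comp
    (measurable_id.sub_const c)).const_mul c⁻¹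
  have hgnn : ∀ y, 0 ≤ g y := fun y => mul_nonneg (by positivity) ENNReal.toReal_nonneg
  have hA : mconv ρ μ = volume.withDensity (fun x => ENNReal.ofReal (g x)) := by
    rw [hρ]; exact stepA μ hc
  have hsubc : Tendsto (fun x : ℝ => x - c) atTop atTop := by
    simpa [sub_eq_add_neg] using
      tendsto_atTop_add_const_right atTop (-c) (tendsto_id (α := ℝ))
  -- integral of g is 1
  have huniv : ∫⁻ y, ENNReal.ofReal (g y) = 1 := by
    have h1 : (volume.withDensity (fun x => ENNReal.ofReal (g x))) univ = 1 := by
      rw [← hA]; exact measure_univ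
    rwa [withDensity_apply _ MeasurableSet.univ, setLIntegral_univ] at h1
  have hint : ∫ y, g y = 1 := by
    rw [integral_eq_lintegral_of_nonneg_ae (Filter.Eventually.of_forall hgnn)
      hgm.aestronglyMeasurable, huniv, ENNReal.toReal_one]
  -- g is long-tailed
  have hpos : ∀ᶠ x in atTop, 0 < g x := by
    filter_upwards [hsubc.eventually (hL c hc).1] with x hx
    exact mul_pos (inv_pos.2 hc) hx
  have hlt : ∀ a : ℝ, Tendsto (fun x => g (x + a) / g x) atTop (nhds 1) := by
    intro a
    have h0 := ((hL c hc).2 a).comp hsubc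
    apply h0.congr
    intro x
    show locMass μ c (x - c + a) / locMass μ c (x - c) = g (x + a) / g x
    rw [hgdef]
    simp only
    rw [mul_div_mul_left _ _ (inv_ne_zero hc.ne'), show x + a - c = x - c + a by ring]
  -- the subexponential ratio
  have hmain : Tendsto (fun x => c⁻¹ *
      (∫⁻ s in Ico (0:ℝ) c, mconv μ μ (Ioc (x - s - c) (x - s))).toReal
      / locMass μ c (x - c)) atTop (nhds 2) := by
    rw [Metric.tendsto_atTop]
    intro ε hε
    obtain ⟨n, hn⟩ := exists_nat_gt (max 2 (3 / ε))
    have hn2 : (2:ℝ) < n := lt_of_le_of_lt (le_max_left _ _) hn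
    have hn3 : 3 / ε < (n:ℝ) := lt_of_le_of_lt (le_max_right _ _) hn
    have hnR : (0:ℝ) < n := by linarith
    have hn0 : 0 < n := by exact_mod_cast hnR
    have hn2' : 2 ≤ n := by exact_mod_cast hn2.le
    have hn1 : 1 ≤ n := hn0
    have hnR' : ((n:ℝ)) ≠ 0 := hnR.ne'
    have hc0 : c ≠ 0 := hc.ne'
    set b : ℝ := c / n with hbdef
    have hb : (0:ℝ) < b := div_pos hc hnR
    have hnb : (n:ℝ) * b = c := by rw [hbdef]; field_simp
    have h3n : 3 / (n:ℝ) < ε := by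
      rw [div_lt_iff₀ hnR]
      have h := (div_lt_iff₀ hε).1 hn3
      nlinarith
    have hinvn : (0:ℝ) < 1 / n := by positivity
    have hcb : ((n + 1 : ℕ):ℝ) * b = c + b := by push_cast; rw [← hnb]; ring
    have hcb' : ((n - 1 : ℕ):ℝ) * b = c - b := by
      rw [Nat.cast_sub hn1]; push_cast; rw [← hnb]; ring
    -- per-term limits, upper
    have tU : ∀ k : ℕ, Tendsto (fun x =>
        locMass (mconv μ μ) (c + b) (x - c - ((k:ℝ) + 1) * b) / locMass μ c (x - c))
        atTop (nhds (2 * (((n + 1 : ℕ):ℝ) / (n:ℝ)))) := by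
      intro k
      have h0 := (tendsto_key (p := n + 1) (q := n) hμ (Nat.succ_pos n) hn0 hb
        (-(((k:ℝ) + 1) * b))).comp hsubc
      apply h0.congr
      intro x
      simp only [Function.comp_apply]
      rw [← sub_eq_add_neg, hcb, hnb]
    have tL : ∀ k : ℕ, Tendsto (fun x =>
        locMass (mconv μ μ) (c - b) (x - c - (k:ℝ) * b) / locMass μ c (x - c))
        atTop (nhds (2 * (((n - 1 : ℕ):ℝ) / (n:ℝ)))) := by
      intro k
      have hp : 0 < n - 1 := by omega
      have h0 := (tendsto_key (p := n - 1) (q := n) hμ hp hn0 hb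
        (-((k:ℝ) * b))).comp hsubc
      apply h0.congr
      intro x
      simp only [Function.comp_apply]
      rw [← sub_eq_add_neg, hcb', hnb]
    -- sums
    have hUsum : Tendsto (fun x => ∑ k ∈ Finset.range n,
        (c⁻¹ * b) * (locMass (mconv μ μ) (c + b) (x - c - ((k:ℝ) + 1) * b)
          / locMass μ c (x - c))) atTop
        (nhds (∑ _k ∈ Finset.range n, (c⁻¹ * b) * (2 * (((n + 1 : ℕ):ℝ) / (n:ℝ))))) :=
      tendsto_finset_sum _ (fun k _ => (tU k).const_mul _)
    have hLsum : Tendsto (fun x => ∑ k ∈ Finset.range n,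
        (c⁻¹ * b) * (locMass (mconv μ μ) (c - b) (x - c - (k:ℝ) * b)
          / locMass μ c (x - c))) atTop
        (nhds (∑ _k ∈ Finset.range n, (c⁻¹ * b) * (2 * (((n - 1 : ℕ):ℝ) / (n:ℝ))))) :=
      tendsto_finset_sum _ (fun k _ => (tL k).const_mul _)
    have hUval : (∑ _k ∈ Finset.range n, (c⁻¹ * b) * (2 * (((n + 1 : ℕ):ℝ) / (n:ℝ))))
        = 2 + 2 / n := by
      rw [Finset.sum_const, Finset.card_range, nsmul_eq_mul, hbdef]
      push_cast
      field_simp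
    have hLval : (∑ _k ∈ Finset.range n, (c⁻¹ * b) * (2 * (((n - 1 : ℕ):ℝ) / (n:ℝ))))
        = 2 - 2 / n := by
      rw [Finset.sum_const, Finset.card_range, nsmul_eq_mul, hbdef, Nat.cast_sub hn1]
      push_cast
      field_simp
    rw [hUval] at hUsum
    rw [hLval] at hLsum
    have evU := hUsum.eventually_lt_const (show (2:ℝ) + 2/n < 2 + 2/n + 1/n by linarith)
    have evL := hLsum.eventually_const_lt (show (2:ℝ) - 2/n - 1/n < 2 - 2/n by linarith)
    have evm : ∀ᶠ x in atTop, 0 < locMass μ c (x - c) := hsubc.eventually (hL c hc).1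
    have hfinal : ∀ᶠ x in atTop, dist (c⁻¹ *
        (∫⁻ s in Ico (0:ℝ) c, mconv μ μ (Ioc (x - s - c) (x - s))).toReal
        / locMass μ c (x - c)) 2 < ε := by
      filter_upwards [evU, evL, evm] with x hxU hxL hxm
      set T : ℝ := (∫⁻ s in Ico (0:ℝ) c, mconv μ μ (Ioc (x - s - c) (x - s))).toReal with hT
      have hTub : T ≤ ∑ k ∈ Finset.range n,
          b * locMass (mconv μ μ) (c + b) (x - c - ((k:ℝ) + 1) * b) := by
        have h0 := Tr_upper (mconv μ μ) hb n x
        rw [hnb] at h0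
        exact h0
      have hTlb : (∑ k ∈ Finset.range n,
          b * locMass (mconv μ μ) (c - b) (x - c - (k:ℝ) * b)) ≤ T := by
        have h0 := Tr_lower (mconv μ μ) hb hn0 x
        rw [hnb] at h0
        exact h0
      have hqU : c⁻¹ * (∑ k ∈ Finset.range n,
            b * locMass (mconv μ μ) (c + b) (x - c - ((k:ℝ) + 1) * b)) / locMass μ c (x - c)
          = ∑ k ∈ Finset.range n,
            (c⁻¹ * b) * (locMass (mconv μ μ) (c + b) (x - c - ((k:ℝ) + 1) * b)
              / locMass μ c (x - c)) := by
        rw [Finset.mul_sum, Finset.sum_div]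
        exact Finset.sum_congr rfl (fun k _ => by ring)
      have hqL : c⁻¹ * (∑ k ∈ Finset.range n,
            b * locMass (mconv μ μ) (c - b) (x - c - (k:ℝ) * b)) / locMass μ c (x - c)
          = ∑ k ∈ Finset.range n,
            (c⁻¹ * b) * (locMass (mconv μ μ) (c - b) (x - c - (k:ℝ) * b)
              / locMass μ c (x - c)) := by
        rw [Finset.mul_sum, Finset.sum_div]
        exact Finset.sum_congr rfl (fun k _ => by ring)
      have hup : c⁻¹ * T / locMass μ c (x - c) < 2 + 2/n + 1/n := by
        calc c⁻¹ * T / locMass μ c (x - c)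
            ≤ c⁻¹ * (∑ k ∈ Finset.range n,
                b * locMass (mconv μ μ) (c + b) (x - c - ((k:ℝ) + 1) * b))
              / locMass μ c (x - c) :=
              (div_le_div_iff_of_pos_right hxm).2 (mul_le_mul_of_nonneg_left hTub (by positivity))
          _ = _ := hqU
          _ < 2 + 2/n + 1/n := hxU
      have hlo : 2 - 2/n - 1/n < c⁻¹ * T / locMass μ c (x - c) := by
        calc (2:ℝ) - 2/n - 1/n
            < ∑ k ∈ Finset.range n,
                (c⁻¹ * b) * (locMass (mconv μ μ) (c - b) (x - c - (k:ℝ) * b)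
                  / locMass μ c (x - c)) := hxL
          _ = c⁻¹ * (∑ k ∈ Finset.range n,
                b * locMass (mconv μ μ) (c - b) (x - c - (k:ℝ) * b))
              / locMass μ c (x - c) := hqL.symm
          _ ≤ c⁻¹ * T / locMass μ c (x - c) :=
              (div_le_div_iff_of_pos_right hxm).2 (mul_le_mul_of_nonneg_left hTlb (by positivity))
      rw [Real.dist_eq, abs_lt]
      constructor
      · have h4 : 2 - ε < 2 - 3/(n:ℝ) := by linarith
        have h5 : 2 - 2/(n:ℝ) - 1/(n:ℝ) = 2 - 3/(n:ℝ) := by ring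
        linarith [hlo]
      · have h5 : 2 + 2/(n:ℝ) + 1/(n:ℝ) = 2 + 3/(n:ℝ) := by ring
        linarith [hup]
    rcases eventually_atTop.1 hfinal with ⟨N, hN⟩
    exact ⟨N, hN⟩
  have hsubexp : Tendsto (fun x => conv g g x / g x) atTop (nhds 2) := by
    apply hmain.congr
    intro x
    have hcx : conv g g x = c⁻¹ * c⁻¹ *
        (∫⁻ s in Ico (0:ℝ) c, mconv μ μ (Ioc (x - s - c) (x - s))).toReal := by
      rw [hgdef]; exact conv_eq μ hc x
    rw [hcx, hgdef]
    simp only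
    rw [mul_assoc, mul_div_mul_left _ _ (inv_ne_zero hc.ne')]
  exact ⟨g, ⟨⟨⟨hgnn, hint⟩, ⟨hpos, hlt⟩⟩, hsubexp⟩, hA⟩
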